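/- Let d ∈ ℕ and u₀ ∈ L¹(ℝ^d) ∩ L²(ℝ^d) with ∫u₀ ≠ 0 (i.e. ũ₀(0) ≠ 0). Let k be a kernel of type PC with relaxation function s(t,μ) nonincreasing in μ and satisfying s(t,μ) ≥ 1/(1 + μ k(t)⁻¹). Let u(t,·) have Fourier transform ũ(t,ξ) = s(t,|ξ|²)ũ₀(ξ). Then there exist c > 0 and t₀ > 0 such that ‖u(t,·)‖_{L²(ℝ^d)} ≥ c · k(t)^{min{1, d/4}} for almost all t ≥ t₀. -/

import Mathlib

open MeasureTheory Real Complex Filter Metric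
open scoped FourierTransform RealInnerProductSpace ENNReal

variable {V : Type*} [NormedAddCommGroup V] [InnerProductSpace ℝ V] [MeasurableSpace V]
  [BorelSpace V] [FiniteDimensional ℝ V]

lemma mult_formula {f g : V → ℂ} (hf : Integrable f) (hg : Integrable g) :
    ∫ ξ, 𝓕 f ξ * g ξ = ∫ x, f x * 𝓕 g x := by
  have hflip : (innerₗ V).flip = innerₗ V := by
    apply LinearMap.ext; intro x; apply LinearMap.ext; intro y
    exact real_inner_comm x y
  have := VectorFourier.integral_fourierIntegral_smul_eq_flip (L := innerₗ V)
    Real.continuous_fourierChar continuous_inner hf hg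
  rw [hflip] at this
  simp only [smul_eq_mul] at this
  exact this

lemma four_zero (f : V → ℂ) : 𝓕 f 0 = ∫ x, f x := by
  simp [Real.fourier_eq]

lemma four_cont {f : V → ℂ} (hf : Integrable f) : Continuous (𝓕 f) :=
  VectorFourier.fourierIntegral_continuous Real.continuous_fourierChar continuous_inner hf

lemma four_zero_of_not_integrable {f : V → ℂ} (hf : ¬ Integrable f) : 𝓕 f 0 = 0 := by
  rw [Real.fourier_eq]
  apply integral_undef
  rw [Real.fourierIntegral_convergent_iff]
  exact hf

lemma four_norm_le {f : V → ℂ} (ξ : V) : ‖𝓕 f ξ‖ ≤ ∫ x, ‖f x‖ :=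
  VectorFourier.norm_fourierIntegral_le_integral_norm _ _ _ _ _

lemma gauss_int {b : ℝ} (hb : 0 < b) :
    Integrable (fun v : V => Complex.exp (-(b:ℂ) * ‖v‖^2)) := by
  simpa using GaussianFourier.integrable_cexp_neg_mul_sq_norm_add
    (b := (b:ℂ)) (by simpa using hb) 0 (0 : V)

lemma gauss_int_real {b : ℝ} (hb : 0 < b) :
    Integrable (fun v : V => rexp (-b * ‖v‖^2)) := by
  have := (gauss_int (V := V) hb).norm
  apply this.congr
  filter_upwards with v
  rw [
    show (-(b:ℂ) * (‖v‖:ℂ)^2) = ((-b*‖v‖^2 : ℝ) : ℂ) by push_cast; ring,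
    Complex.norm_exp, Complex.ofReal_re]

lemma gauss_four_norm {b : ℝ} (hb : 0 < b) (x : V) :
    ‖𝓕 (fun v : V => Complex.exp (-(b:ℂ) * ‖v‖^2)) x‖
      = (π / b) ^ ((Module.finrank ℝ V : ℝ) / 2) * rexp (-(π^2/b) * ‖x‖^2) := by
  rw [fourier_gaussian_innerProductSpace (by simpa using hb)]
  rw [norm_mul,
    show ((π:ℂ)/(b:ℂ)) = ((π/b : ℝ) : ℂ) by push_cast; ring,
    show ((Module.finrank ℝ V : ℂ)/2) = (((Module.finrank ℝ V : ℝ)/2 : ℝ) : ℂ) by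
      push_cast; ring,
    Complex.norm_cpow_eq_rpow_re_of_pos (by positivity), Complex.ofReal_re,
    show (-(π:ℂ)^2 * ((‖x‖:ℂ))^2 / (b:ℂ)) = ((-(π^2/b) * ‖x‖^2 : ℝ) : ℂ) by push_cast; ring,
    Complex.norm_exp, Complex.ofReal_re]

lemma rpow_sq {ρ : ℝ} (hρ : 0 ≤ ρ) (y : ℝ) : (ρ^2) ^ y = ρ ^ (2*y) := by
  rw [← Real.rpow_natCast ρ 2, ← Real.rpow_mul hρ]
  norm_num

lemma rpow_CG (D : ℝ) {ρ : ℝ} (hρ : 0 < ρ) :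
    ((((π*ρ^2) ^ (D/2))^2 * (π / (2 * (π^2*ρ^2))) ^ (D/2)) ^ (2⁻¹:ℝ))
      = (π/2) ^ (D/4) * ρ ^ (D/2) := by
  have h1 : (0:ℝ) < π*ρ^2 := by positivity
  have e1 : π / (2*(π^2*ρ^2)) = 2⁻¹ * (π*ρ^2)⁻¹ := by field_simp
  have e2 : ((π*ρ^2) ^ (D/2))^2 = (π*ρ^2) ^ D := by
    rw [← Real.rpow_natCast ((π*ρ^2) ^ (D/2)) 2, ← Real.rpow_mul h1.le]; norm_num
  have e3 : (2⁻¹ * (π*ρ^2)⁻¹ : ℝ) ^ (D/2) = (2:ℝ)⁻¹ ^ (D/2) * (π*ρ^2) ^ (-(D/2)) := by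
    rw [Real.mul_rpow (by norm_num) (by positivity), Real.inv_rpow h1.le,
      ← Real.rpow_neg h1.le]
  have e4 : (π*ρ^2) ^ D * ((2:ℝ)⁻¹ ^ (D/2) * (π*ρ^2) ^ (-(D/2)))
      = (2:ℝ)⁻¹ ^ (D/2) * (π*ρ^2) ^ (D/2) := by
    rw [mul_comm ((2:ℝ)⁻¹ ^ (D/2)) _, ← mul_assoc, ← Real.rpow_add h1,
      show D + -(D/2) = D/2 by ring]
    ring
  have e5 : (((2:ℝ)⁻¹ ^ (D/2) * (π*ρ^2) ^ (D/2)) : ℝ) ^ (2⁻¹:ℝ)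
      = (2:ℝ)⁻¹ ^ (D/4) * (π*ρ^2) ^ (D/4) := by
    rw [Real.mul_rpow (by positivity) (by positivity), ← Real.rpow_mul (by norm_num),
      ← Real.rpow_mul h1.le, show D/2*(2:ℝ)⁻¹ = D/4 by ring]
  have e6 : (π*ρ^2) ^ (D/4) = π ^ (D/4) * ρ ^ (D/2) := by
    rw [Real.mul_rpow pi_pos.le (by positivity), rpow_sq hρ.le, show 2*(D/4) = D/2 by ring]
  have e7 : ((π/2 : ℝ)) ^ (D/4) = π ^ (D/4) * (2:ℝ)⁻¹ ^ (D/4) := by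
    rw [div_eq_mul_inv, Real.mul_rpow pi_pos.le (by norm_num)]
  rw [e1, e3, e2, e4, e5, e6, e7]; ring

set_option maxHeartbeats 2000000 in
theorem lower_L2_decay_estimate
    (d : ℕ) (hd : 1 ≤ d)
    (u0 : EuclideanSpace ℝ (Fin d) → ℂ)
    (hu01 : Integrable u0)
    (hu02 : MemLp u0 2 volume)
    (hmean : (∫ x, u0 x) ≠ 0)
    (k : ℝ → ℝ) (hknonneg : ∀ t > (0:ℝ), 0 ≤ k t) (hkanti : AntitoneOn k (Set.Ioi 0))
    (s : ℝ → ℝ → ℝ)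
    (hsanti : ∀ t > (0:ℝ), AntitoneOn (s t) (Set.Ici 0))
    (hslow : ∀ t > (0:ℝ), ∀ μ ≥ (0:ℝ), 1 / (1 + μ * (k t)⁻¹) ≤ s t μ)
    (u : ℝ → EuclideanSpace ℝ (Fin d) → ℂ)
    (hu2 : ∀ t > (0:ℝ), MemLp (u t) 2 volume)
    (hufour : ∀ t > (0:ℝ), ∀ ξ, 𝓕 (u t) ξ = (s t (‖ξ‖ ^ 2) : ℂ) * 𝓕 u0 ξ) :
    ∃ c > (0:ℝ), ∃ t₀ > (0:ℝ), ∀ᵐ t ∂(volume.restrict (Set.Ici t₀)),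
      c * k t ^ (min 1 ((d:ℝ) / 4)) ≤ (eLpNorm (u t) 2 volume).toReal := by
  classical
  haveI : Nonempty (Fin d) := ⟨⟨0, hd⟩⟩
  haveI : Nontrivial (EuclideanSpace ℝ (Fin d)) :=
    inferInstance
  set D : ℝ := (d:ℝ) with hDdef
  have hDpos : 0 < D := by rw [hDdef]; exact_mod_cast hd
  have hfr : Module.finrank ℝ (EuclideanSpace ℝ (Fin d)) = d := finrank_euclideanSpace_fin
  set F0 : EuclideanSpace ℝ (Fin d) → ℂ := 𝓕 u0 with hF0def
  have hF0cont : Continuous F0 := four_cont hu01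
  have hF00 : F0 0 = ∫ x, u0 x := four_zero u0
  set m : ℝ := ‖F0 0‖ with hmdef
  have hmpos : 0 < m := by rw [hmdef, hF00]; exact norm_pos_iff.2 hmean
  set N : ℝ := ∫ x, ‖u0 x‖ with hNdef
  have hF0le : ∀ ξ, ‖F0 ξ‖ ≤ N := fun ξ => four_norm_le ξ
  have hNpos : 0 < N := lt_of_lt_of_le hmpos (hF0le 0)
  -- choice of ρ₀ from continuity
  obtain ⟨ρ₀', hρ₀'pos, hρ₀'⟩ :=
    Metric.continuousAt_iff.1 hF0cont.continuousAt (ε := m/2) (by positivity)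
  set ρ₀ : ℝ := ρ₀'/2 with hρ₀def
  have hρ₀pos : 0 < ρ₀ := by positivity
  have hclose : ∀ ξ : EuclideanSpace ℝ (Fin d), ‖ξ‖ ≤ ρ₀ → ‖F0 ξ - F0 0‖ ≤ m/2 := by
    intro ξ hξ
    have h1 : dist ξ 0 < ρ₀' := by
      rw [dist_zero_right]; rw [hρ₀def] at hξ; linarith
    have := hρ₀' h1
    rw [dist_eq_norm] at this
    exact this.le
  have hlow : ∀ ξ, ‖ξ‖ ≤ ρ₀ → m^2/2 ≤ ((starRingEnd ℂ) (F0 0) * F0 ξ).re := by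
    intro ξ hξ
    have key : (starRingEnd ℂ) (F0 0) * F0 ξ
        = (starRingEnd ℂ) (F0 0) * F0 0 + (starRingEnd ℂ) (F0 0) * (F0 ξ - F0 0) := by ring
    have h1 : ((starRingEnd ℂ) (F0 0) * F0 0).re = m^2 := by
      rw [mul_comm, Complex.mul_conj]
      rw [hmdef]
      simp [Complex.normSq_eq_norm_sq, ← Complex.ofReal_pow]
    have h2 : -(m*(m/2)) ≤ ((starRingEnd ℂ) (F0 0) * (F0 ξ - F0 0)).re := by
      have hb : ‖(starRingEnd ℂ) (F0 0) * (F0 ξ - F0 0)‖ ≤ m*(m/2) := by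
        rw [norm_mul, RCLike.norm_conj]
        exact mul_le_mul le_rfl (hclose ξ hξ) (norm_nonneg _) hmpos.le
      have h3 : |((starRingEnd ℂ) (F0 0) * (F0 ξ - F0 0)).re|
          ≤ ‖(starRingEnd ℂ) (F0 0) * (F0 ξ - F0 0)‖ := by
        exact Complex.abs_re_le_norm _
      have := neg_le_of_abs_le (h3.trans hb)
      linarith
    rw [key, Complex.add_re, h1]
    linarith
  have habs : ∀ ξ, |((starRingEnd ℂ) (F0 0) * F0 ξ).re| ≤ m * N := by
    intro ξ
    refine le_trans (by exact Complex.abs_re_le_norm _ :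
      |((starRingEnd ℂ) (F0 0) * F0 ξ).re| ≤ ‖(starRingEnd ℂ) (F0 0) * F0 ξ‖) ?_
    rw [norm_mul, RCLike.norm_conj]
    exact mul_le_mul le_rfl (hF0le ξ) (norm_nonneg _) hmpos.le
  have hspos : ∀ t, 0 < t → ∀ μ', 0 ≤ μ' → 0 < s t μ' := by
    intro t ht μ' hμ'
    have h := hslow t ht μ' hμ'
    have hden : 0 < 1 + μ' * (k t)⁻¹ :=
      add_pos_of_pos_of_nonneg one_pos (mul_nonneg hμ' (inv_nonneg.2 (hknonneg t ht)))
    calc (0:ℝ) < 1/(1+μ'*(k t)⁻¹) := by positivity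
      _ ≤ s t μ' := h
  have huint : ∀ t, 0 < t → Integrable (u t) := by
    intro t ht
    by_contra hni
    have h0 : 𝓕 (u t) 0 = 0 := four_zero_of_not_integrable hni
    rw [hufour t ht 0] at h0
    rcases mul_eq_zero.1 h0 with h | h
    · have hs0 := hspos t ht (‖(0:EuclideanSpace ℝ (Fin d))‖^2) (by positivity)
      exact hs0.ne' (by exact_mod_cast h)
    · exact hmean (by rw [← hF00]; exact h)
  -- volume constants
  set V₁ : ℝ := (volume (Metric.ball (0:EuclideanSpace ℝ (Fin d)) 1)).toReal with hV₁def
  have hV₁pos : 0 < V₁ := by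
    rw [hV₁def]
    exact ENNReal.toReal_pos (measure_ball_pos volume _ one_pos).ne'
      measure_ball_lt_top.ne
  have hball : ∀ ρ : ℝ, 0 < ρ →
      (volume (Metric.closedBall (0:EuclideanSpace ℝ (Fin d)) ρ)).toReal = ρ^d * V₁ := by
    intro ρ hρ
    rw [Measure.addHaar_closedBall _ _ hρ.le, ENNReal.toReal_mul,
      ENNReal.toReal_ofReal (by positivity), hfr]
  -- constants
  set Q : ℝ := (π/2) ^ (D/4) with hQdef
  have hQpos : 0 < Q := Real.rpow_pos_of_pos (by positivity) _
  set P : ℝ := m * rexp (-1) * V₁ / 4 with hPdef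
  have hPpos : 0 < P := by
    rw [hPdef]
    exact div_pos (mul_pos (mul_pos hmpos (Real.exp_pos _)) hV₁pos) (by norm_num)
  set c₀ : ℝ := P / Q with hc₀def
  have hc₀pos : 0 < c₀ := div_pos hPpos hQpos
  set ε₀ : ℝ := P / (N * (2*π) ^ (D/2)) with hε₀def
  have hε₀pos : 0 < ε₀ :=
    div_pos hPpos (mul_pos hNpos (Real.rpow_pos_of_pos (by positivity) _))
  set δ : ℝ := min ε₀ (rexp (-1)) with hδdef
  have hδpos : 0 < δ := lt_min hε₀pos (Real.exp_pos _)
  set L : ℝ := -Real.log δ with hLdef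
  have hexpδ : rexp (-L) ≤ ε₀ := by
    rw [hLdef, neg_neg, Real.exp_log hδpos]
    exact min_le_left _ _
  have hLpos : 0 < L := by
    rw [hLdef]
    have h1 : Real.log δ ≤ Real.log (rexp (-1)) :=
      Real.log_le_log hδpos (min_le_right _ _)
    rw [Real.log_exp] at h1
    linarith
  set ρ₁ : ℝ := min ρ₀ (ρ₀ / Real.sqrt (2*L)) with hρ₁def
  have hρ₁pos : 0 < ρ₁ :=
    lt_min hρ₀pos (div_pos hρ₀pos (Real.sqrt_pos.2 (by linarith)))
  have hρ₁ρ₀ : ρ₁ ≤ ρ₀ := min_le_left _ _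
  have htail : ∀ ρ : ℝ, 0 < ρ → ρ ≤ ρ₁ → rexp (-(ρ₀^2/(2*ρ^2))) ≤ ε₀ := by
    intro ρ hρ hρle
    have h1 : ρ ≤ ρ₀ / Real.sqrt (2*L) := le_trans hρle (min_le_right _ _)
    have hsq : ρ^2 ≤ ρ₀^2/(2*L) := by
      calc ρ^2 ≤ (ρ₀/Real.sqrt (2*L))^2 := pow_le_pow_left₀ hρ.le h1 2
        _ = ρ₀^2/(2*L) := by rw [div_pow, Real.sq_sqrt (by positivity)]
    have h2 : L ≤ ρ₀^2/(2*ρ^2) := by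
      rw [le_div_iff₀ (by positivity)]
      have h3 := (le_div_iff₀ (by positivity : (0:ℝ) < 2*L)).1 hsq
      nlinarith
    calc rexp (-(ρ₀^2/(2*ρ^2))) ≤ rexp (-L) := by
          apply Real.exp_le_exp.2; linarith
      _ ≤ ε₀ := hexpδ
  have key : ∀ t, 0 < t → ∀ τ : ℝ, 0 < τ → τ ≤ ρ₁^2 →
      c₀ * (s t τ * τ ^ (D/4)) ≤ (eLpNorm (u t) 2 volume).toReal := by
    intro t ht τ hτpos hτle
    set ρ : ℝ := Real.sqrt τ with hρdef
    have hρpos : 0 < ρ := Real.sqrt_pos.2 hτpos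
    have hρsq : ρ^2 = τ := Real.sq_sqrt hτpos.le
    have hρρ₁ : ρ ≤ ρ₁ := by
      rw [hρdef]
      calc Real.sqrt τ ≤ Real.sqrt (ρ₁^2) := Real.sqrt_le_sqrt hτle
        _ = ρ₁ := Real.sqrt_sq hρ₁pos.le
    have hρρ₀ : ρ ≤ ρ₀ := hρρ₁.trans hρ₁ρ₀
    set b : ℝ := (ρ^2)⁻¹ with hbdef
    have hbpos : 0 < b := by positivity
    set g : EuclideanSpace ℝ (Fin d) → ℂ := fun ξ => Complex.exp (-(b:ℂ) * ‖ξ‖^2) with hgdef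
    have hgint : Integrable g := gauss_int hbpos
    have hgreal : ∀ ξ, g ξ = ((rexp (-b * ‖ξ‖^2) : ℝ) : ℂ) := by
      intro ξ
      rw [hgdef, Complex.ofReal_exp]
      norm_cast
    set G := 𝓕 g with hGdef
    have hGnorm : ∀ x, ‖G x‖ = (π/b) ^ (D/2) * rexp (-(π^2/b) * ‖x‖^2) := by
      intro x
      rw [hGdef, hgdef, gauss_four_norm hbpos x, hfr]
    have hGcont : Continuous G := four_cont hgint
    have hutint := huint t ht
    have hFucont : Continuous (𝓕 (u t)) := four_cont hutint
    have hIint : Integrable (fun ξ => 𝓕 (u t) ξ * g ξ) :=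
      hgint.bdd_mul hFucont.aestronglyMeasurable (Filter.Eventually.of_forall fun ξ => four_norm_le (f := u t) ξ)
    have hIint2 : Integrable (fun ξ => (starRingEnd ℂ) (F0 0) * (𝓕 (u t) ξ * g ξ)) :=
      hIint.const_mul _
    set r : EuclideanSpace ℝ (Fin d) → ℝ :=
      fun ξ => ((starRingEnd ℂ) (F0 0) * (𝓕 (u t) ξ * g ξ)).re with hrdef
    have hrint : Integrable r := by
      rw [hrdef]
      exact ContinuousLinearMap.integrable_comp Complex.reCLM hIint2
    have hrform : ∀ ξ, r ξ = s t (‖ξ‖^2) * rexp (-b*‖ξ‖^2) * ((starRingEnd ℂ) (F0 0) * F0 ξ).re := by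
      intro ξ
      rw [hrdef]
      simp only []
      rw [hufour t ht ξ, hgreal ξ,
        show (starRingEnd ℂ) (F0 0) * ((s t (‖ξ‖^2) : ℂ) * F0 ξ * ((rexp (-b*‖ξ‖^2):ℝ):ℂ))
          = ((s t (‖ξ‖^2) * rexp (-b*‖ξ‖^2) : ℝ) : ℂ) * ((starRingEnd ℂ) (F0 0) * F0 ξ) by
            push_cast; ring,
        Complex.re_ofReal_mul]
    set eρ : ℝ := rexp (-(ρ₀^2/(2*ρ^2))) with heρdef
    set b2 : ℝ := (2*ρ^2)⁻¹ with hb2def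
    have hb2pos : 0 < b2 := by positivity
    have hstτ := hspos t ht τ hτpos.le
    have hstτ' : 0 ≤ s t τ := hstτ.le
    set f1 : EuclideanSpace ℝ (Fin d) → ℝ :=
      (Metric.closedBall (0:EuclideanSpace ℝ (Fin d)) ρ).indicator
        (fun _ => m^2/2 * rexp (-1)) with hf1def
    set f2 : EuclideanSpace ℝ (Fin d) → ℝ :=
      ((Metric.closedBall (0:EuclideanSpace ℝ (Fin d)) ρ₀)ᶜ).indicator
        (fun ξ' => m * N * eρ * rexp (-b2*‖ξ'‖^2)) with hf2def
    have hf1int : Integrable f1 := by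
      rw [hf1def, integrable_indicator_iff measurableSet_closedBall]
      exact integrableOn_const measure_closedBall_lt_top.ne
    have hf2int : Integrable f2 := by
      rw [hf2def, integrable_indicator_iff measurableSet_closedBall.compl]
      exact ((gauss_int_real hb2pos).const_mul _).integrableOn
    set ψ : EuclideanSpace ℝ (Fin d) → ℝ := fun ξ => s t τ * (f1 ξ - f2 ξ) with hψdef
    have hψint : Integrable ψ := by
      rw [hψdef]
      exact (hf1int.sub hf2int).const_mul _
    have hpoint : ∀ ξ, ψ ξ ≤ r ξ := by
      intro ξ
      have hsξ := hspos t ht (‖ξ‖^2) (by positivity)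
      rw [hψdef, hrform ξ]
      simp only []
      by_cases h1 : ‖ξ‖ ≤ ρ
      · have hmem : ξ ∈ Metric.closedBall (0:EuclideanSpace ℝ (Fin d)) ρ := by
          simp [Metric.mem_closedBall, dist_zero_right, h1]
        have hmem0 : ξ ∈ Metric.closedBall (0:EuclideanSpace ℝ (Fin d)) ρ₀ := by
          simp [Metric.mem_closedBall, dist_zero_right]
          exact h1.trans hρρ₀
        rw [hf1def, hf2def, Set.indicator_of_mem hmem,
          Set.indicator_of_notMem (by simpa using hmem0)]
        have hs1 : s t τ ≤ s t (‖ξ‖^2) := by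
          apply hsanti t ht (Set.mem_Ici.2 (by positivity)) (Set.mem_Ici.2 hτpos.le)
          rw [← hρsq]
          exact pow_le_pow_left₀ (norm_nonneg _) h1 2
        have he1 : rexp (-1) ≤ rexp (-b*‖ξ‖^2) := by
          apply Real.exp_le_exp.2
          have h2 : ‖ξ‖^2 ≤ ρ^2 := pow_le_pow_left₀ (norm_nonneg _) h1 2
          have h3 : b * ‖ξ‖^2 ≤ 1 := by
            rw [hbdef]
            calc (ρ^2)⁻¹ * ‖ξ‖^2 ≤ (ρ^2)⁻¹ * ρ^2 :=
                mul_le_mul_of_nonneg_left h2 (by positivity)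
              _ = 1 := inv_mul_cancel₀ (by positivity)
          linarith
        have hre1 : m^2/2 ≤ ((starRingEnd ℂ) (F0 0) * F0 ξ).re := hlow ξ (h1.trans hρρ₀)
        have c1 : s t τ * rexp (-1) ≤ s t (‖ξ‖^2) * rexp (-b*‖ξ‖^2) :=
          mul_le_mul hs1 he1 (Real.exp_pos _).le hsξ.le
        calc s t τ * (m^2/2 * rexp (-1) - 0) = (s t τ * rexp (-1)) * (m^2/2) := by ring
          _ ≤ (s t (‖ξ‖^2) * rexp (-b*‖ξ‖^2)) * ((starRingEnd ℂ) (F0 0) * F0 ξ).re :=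
              mul_le_mul c1 hre1 (by positivity) (mul_nonneg hsξ.le (Real.exp_pos _).le)
      · by_cases h2 : ‖ξ‖ ≤ ρ₀
        · have hmem0 : ξ ∈ Metric.closedBall (0:EuclideanSpace ℝ (Fin d)) ρ₀ := by
            simp [Metric.mem_closedBall, dist_zero_right]; exact h2
          rw [hf1def, hf2def,
            Set.indicator_of_notMem
              (by simp only [Metric.mem_closedBall, dist_zero_right]; exact h1),
            Set.indicator_of_notMem (by simpa using hmem0)]
          have hre1 := hlow ξ h2
          have : (0:ℝ) ≤ s t (‖ξ‖^2) * rexp (-b*‖ξ‖^2) * ((starRingEnd ℂ) (F0 0) * F0 ξ).re :=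
            mul_nonneg (mul_nonneg hsξ.le (Real.exp_pos _).le) (le_trans (by positivity) hre1)
          simpa using this
        · have hnm : ξ ∉ Metric.closedBall (0:EuclideanSpace ℝ (Fin d)) ρ := by
            simp [Metric.mem_closedBall, dist_zero_right]; linarith [lt_of_not_ge h1]
          have hm2 : ξ ∈ (Metric.closedBall (0:EuclideanSpace ℝ (Fin d)) ρ₀)ᶜ := by
            simp [Metric.mem_closedBall, dist_zero_right]; linarith [lt_of_not_ge h2]
          rw [hf1def, hf2def, Set.indicator_of_notMem hnm, Set.indicator_of_mem hm2]
          have hξ2 : ρ₀^2 ≤ ‖ξ‖^2 := by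
            have := (lt_of_not_ge h2).le
            exact pow_le_pow_left₀ hρ₀pos.le this 2
          have hs2 : s t (‖ξ‖^2) ≤ s t τ := by
            apply hsanti t ht (Set.mem_Ici.2 hτpos.le) (Set.mem_Ici.2 (by positivity))
            rw [← hρsq]
            have : ρ^2 ≤ ρ₀^2 := pow_le_pow_left₀ hρpos.le hρρ₀ 2
            linarith
          have he2 : rexp (-b*‖ξ‖^2) ≤ eρ * rexp (-b2*‖ξ‖^2) := by
            rw [heρdef, ← Real.exp_add]
            apply Real.exp_le_exp.2
            rw [hbdef, hb2def]
            have he : (ρ^2)⁻¹*‖ξ‖^2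
                = ρ₀^2/(2*ρ^2) + ((2*ρ^2)⁻¹*‖ξ‖^2) + (‖ξ‖^2 - ρ₀^2)/(2*ρ^2) := by
              field_simp
              ring
            have hnn : 0 ≤ (‖ξ‖^2 - ρ₀^2)/(2*ρ^2) :=
              div_nonneg (by linarith) (by positivity)
            linarith [he, hnn]
          have habs' := habs ξ
          have hr1 : -(s t (‖ξ‖^2) * rexp (-b*‖ξ‖^2) * (m*N))
              ≤ s t (‖ξ‖^2) * rexp (-b*‖ξ‖^2) * ((starRingEnd ℂ) (F0 0) * F0 ξ).re := by
            have h := neg_le_of_abs_le habs'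
            have := mul_le_mul_of_nonneg_left h
              (mul_nonneg hsξ.le (Real.exp_pos (-b*‖ξ‖^2)).le)
            calc -(s t (‖ξ‖^2) * rexp (-b*‖ξ‖^2) * (m*N))
                = s t (‖ξ‖^2) * rexp (-b*‖ξ‖^2) * (-(m*N)) := by ring
              _ ≤ _ := this
          have hr2 : s t (‖ξ‖^2) * rexp (-b*‖ξ‖^2) * (m*N)
              ≤ s t τ * (eρ * rexp (-b2*‖ξ‖^2)) * (m*N) := by
            apply mul_le_mul_of_nonneg_right _ (by positivity)
            exact mul_le_mul hs2 he2 (Real.exp_pos _).le hstτ'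
          calc s t τ * (0 - m*N*eρ*rexp (-b2*‖ξ‖^2))
              = -(s t τ * (eρ*rexp (-b2*‖ξ‖^2)) * (m*N)) := by ring
            _ ≤ -(s t (‖ξ‖^2)*rexp (-b*‖ξ‖^2)*(m*N)) := neg_le_neg hr2
            _ ≤ _ := hr1
    have hint_mono : ∫ ξ, ψ ξ ≤ ∫ ξ, r ξ := integral_mono hψint hrint hpoint
    have hψval : s t τ * (m^2/2*rexp (-1) * (ρ^d * V₁) - m*N*eρ*(π/b2)^(D/2)) ≤ ∫ ξ, ψ ξ := by
      rw [hψdef]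
      rw [integral_const_mul, integral_sub hf1int hf2int]
      apply mul_le_mul_of_nonneg_left _ hstτ'
      have h1 : ∫ ξ, f1 ξ = ρ^d*V₁ * (m^2/2*rexp (-1)) := by
        rw [hf1def, integral_indicator_const _ measurableSet_closedBall, measureReal_def, hball ρ hρpos]
        simp [smul_eq_mul]
      have h2 : ∫ ξ, f2 ξ ≤ m*N*eρ*(π/b2)^(D/2) := by
        rw [hf2def, integral_indicator measurableSet_closedBall.compl]
        calc ∫ ξ in (Metric.closedBall (0:EuclideanSpace ℝ (Fin d)) ρ₀)ᶜ,
              m*N*eρ*rexp (-b2*‖ξ‖^2)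
            ≤ ∫ ξ, m*N*eρ*rexp (-b2*‖ξ‖^2) := by
              apply setIntegral_le_integral ((gauss_int_real hb2pos).const_mul _)
              filter_upwards with ξ
              have : 0 < m*N*eρ*rexp (-b2*‖ξ‖^2) := by
                rw [heρdef]
                positivity
              exact this.le
          _ = m*N*eρ*(π/b2)^(D/2) := by
              rw [integral_const_mul, GaussianFourier.integral_rexp_neg_mul_sq_norm hb2pos, hfr]
      linarith [h1, h2]
    have htail2 : m*N*eρ*(π/b2)^(D/2) ≤ m * (P * ρ^d) := by
      have h1 : (π/b2 : ℝ) = (2*π) * ρ^2 := by rw [hb2def]; field_simp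
      have h2 : ((2*π) * ρ^2 : ℝ)^(D/2) = (2*π)^(D/2) * ρ^D := by
        rw [Real.mul_rpow (by positivity) (by positivity), rpow_sq hρpos.le,
          show 2*(D/2) = D by ring]
      have h3 : eρ ≤ ε₀ := htail ρ hρpos hρρ₁
      have h4 : (ρ:ℝ)^(D) = ρ^d := by rw [hDdef]; exact Real.rpow_natCast ρ d
      have h5 : N * ε₀ * (2*π)^(D/2) = P := by
        rw [hε₀def]
        field_simp
      rw [h1, h2, h4]
      calc m*N*eρ*((2*π)^(D/2)*ρ^d) = (m*(2*π)^(D/2)*ρ^d*N) * eρ := by ring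
        _ ≤ (m*(2*π)^(D/2)*ρ^d*N) * ε₀ := by
            apply mul_le_mul_of_nonneg_left h3
            have : (0:ℝ) < (2*π)^(D/2) := Real.rpow_pos_of_pos (by positivity) _
            positivity
        _ = m * (P * ρ^d) := by rw [← h5]; ring
    have hmain : m * (P * ρ^d) * s t τ ≤ ∫ ξ, r ξ := by
      have hst := le_trans hψval hint_mono
      have hPdef' : m^2/2*rexp (-1) * (ρ^d*V₁) = 2*(m*(P*ρ^d)) := by rw [hPdef]; ring
      have h6 : s t τ * (m*(P*ρ^d))
          ≤ s t τ * (m^2/2*rexp (-1) * (ρ^d * V₁) - m*N*eρ*(π/b2)^(D/2)) := by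
        apply mul_le_mul_of_nonneg_left _ hstτ'
        linarith [htail2, hPdef']
      calc m*(P*ρ^d) * s t τ = s t τ * (m*(P*ρ^d)) := by ring
        _ ≤ _ := h6
        _ ≤ ∫ ξ, r ξ := hst
    set I : ℂ := ∫ ξ, 𝓕 (u t) ξ * g ξ with hIdef
    have hre : ∫ ξ, r ξ = ((starRingEnd ℂ) (F0 0) * I).re := by
      rw [hIdef, ← integral_const_mul]
      rw [hrdef]
      exact ContinuousLinearMap.integral_comp_comm Complex.reCLM hIint2
    have hreabs : ((starRingEnd ℂ) (F0 0) * I).re ≤ m * ‖I‖ := by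
      calc ((starRingEnd ℂ) (F0 0) * I).re ≤ ‖(starRingEnd ℂ) (F0 0) * I‖ := by
            exact Complex.re_le_norm _
        _ = m * ‖I‖ := by rw [norm_mul, RCLike.norm_conj]
    have hpq : Real.HolderConjugate 2 2 := ⟨by norm_num, by norm_num, by norm_num⟩
    have h2e : (ENNReal.ofReal (2:ℝ)) = 2 := by
      rw [ENNReal.ofReal_ofNat]
    have hu2' : MemLp (u t) (ENNReal.ofReal 2) volume := by rw [h2e]; exact hu2 t ht
    have hGsq : Integrable (fun x => ‖G x‖^2) := by
      apply (((gauss_int_real (b := 2*(π^2/b)) (by positivity)).const_mul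
        (((π/b)^(D/2))^2)).congr ?_)
      filter_upwards with x
      rw [hGnorm x, mul_pow, ← Real.exp_nat_mul]
      congr 1
      push_cast
      ring
    have hGmem : MemLp G 2 volume :=
      (memLp_two_iff_integrable_sq_norm hGcont.aestronglyMeasurable).2 hGsq
    have hGmem' : MemLp G (ENNReal.ofReal 2) volume := by rw [h2e]; exact hGmem
    have hmul : I = ∫ x, u t x * G x := by
      rw [hIdef, hGdef]
      exact mult_formula hutint hgint
    have hcs : ‖I‖ ≤ (∫ x, ‖u t x‖^(2:ℝ))^(1/(2:ℝ)) * (∫ x, ‖G x‖^(2:ℝ))^(1/(2:ℝ)) := by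
      calc ‖I‖ = ‖∫ x, u t x * G x‖ := by rw [hmul]
        _ ≤ ∫ x, ‖u t x * G x‖ := norm_integral_le_integral_norm _
        _ = ∫ x, ‖u t x‖ * ‖G x‖ := by simp [norm_mul]
        _ ≤ _ := integral_mul_norm_le_Lp_mul_Lq hpq hu2' hGmem'
    have hCG : (∫ x, ‖G x‖^(2:ℝ))^(1/(2:ℝ)) = Q * ρ^(D/2) := by
      have hπb : π/b = π*ρ^2 := by rw [hbdef]; field_simp
      have hπ2b : 2*(π^2/b) = 2*(π^2*ρ^2) := by rw [hbdef]; field_simp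
      have h1 : ∀ x : EuclideanSpace ℝ (Fin d),
          ‖G x‖^(2:ℝ) = ((π*ρ^2)^(D/2))^2 * rexp (-(2*(π^2*ρ^2))*‖x‖^2) := by
        intro x
        rw [Real.rpow_two, hGnorm x, mul_pow, ← Real.exp_nat_mul, hπb]
        rw [show ((2:ℕ):ℝ) * (-(π^2/b) * ‖x‖^2) = -(2*(π^2/b))*‖x‖^2 by push_cast; ring, hπ2b]
      rw [integral_congr_ae (Filter.Eventually.of_forall h1), integral_const_mul,
        GaussianFourier.integral_rexp_neg_mul_sq_norm (by positivity), hfr]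
      rw [show ((d:ℝ)/2) = D/2 by rw [hDdef], one_div, rpow_CG D hρpos, hQdef]
    have hSqN : (eLpNorm (u t) 2 volume).toReal = (∫ x, ‖u t x‖^(2:ℝ))^(1/(2:ℝ)) := by
      rw [(hu2 t ht).eLpNorm_eq_integral_rpow_norm (by norm_num) (by norm_num)]
      rw [ENNReal.toReal_ofReal]
      · norm_num
      · apply Real.rpow_nonneg
        exact integral_nonneg fun x => Real.rpow_nonneg (norm_nonneg _) _
    -- combine
    have hchain : m * (P * ρ^d) * s t τ
        ≤ m * ((eLpNorm (u t) 2 volume).toReal * (Q * ρ^(D/2))) := by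
      calc m * (P * ρ^d) * s t τ ≤ ∫ ξ, r ξ := hmain
        _ = ((starRingEnd ℂ) (F0 0) * I).re := hre
        _ ≤ m * ‖I‖ := hreabs
        _ ≤ m * ((∫ x, ‖u t x‖^(2:ℝ))^(1/(2:ℝ)) * (∫ x, ‖G x‖^(2:ℝ))^(1/(2:ℝ))) :=
            mul_le_mul_of_nonneg_left hcs hmpos.le
        _ = m * ((eLpNorm (u t) 2 volume).toReal * (Q * ρ^(D/2))) := by
            rw [hCG, hSqN]
    have h7 : P * ρ^d * s t τ ≤ (eLpNorm (u t) 2 volume).toReal * (Q * ρ^(D/2)) := by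
      have h' : m * (P * ρ^d * s t τ)
          ≤ m * ((eLpNorm (u t) 2 volume).toReal * (Q * ρ^(D/2))) := by
        calc m * (P * ρ^d * s t τ) = m * (P * ρ^d) * s t τ := by ring
          _ ≤ _ := hchain
      exact le_of_mul_le_mul_left h' hmpos
    have hτρ : τ^(D/4) = ρ^(D/2) := by
      rw [← hρsq, rpow_sq hρpos.le, show 2*(D/4) = D/2 by ring]
    have hρd : (ρ:ℝ)^d = ρ^(D/2) * ρ^(D/2) := by
      rw [← Real.rpow_natCast ρ d, ← Real.rpow_add hρpos]
      congr 1
      rw [hDdef]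
      ring
    rw [hτρ]
    have hRpos : 0 < ρ^(D/2) := Real.rpow_pos_of_pos hρpos _
    have h8 : P * (ρ^(D/2) * ρ^(D/2)) * s t τ
        ≤ (eLpNorm (u t) 2 volume).toReal * (Q * ρ^(D/2)) := by
      rw [← hρd]; exact h7
    have h9 : P * ρ^(D/2) * s t τ ≤ (eLpNorm (u t) 2 volume).toReal * Q := by
      apply le_of_mul_le_mul_right _ hRpos
      calc P * ρ^(D/2) * s t τ * ρ^(D/2)
          = P * (ρ^(D/2) * ρ^(D/2)) * s t τ := by ring
        _ ≤ (eLpNorm (u t) 2 volume).toReal * (Q * ρ^(D/2)) := h8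
        _ = (eLpNorm (u t) 2 volume).toReal * Q * ρ^(D/2) := by ring
    rw [hc₀def, div_mul_eq_mul_div, div_le_iff₀ hQpos]
    linarith [h9]
  -- final assembly
  have hk1 : ∀ t : ℝ, 1 ≤ t → k t ≤ k 1 := fun t htt =>
    hkanti (Set.mem_Ioi.2 one_pos) (Set.mem_Ioi.2 (lt_of_lt_of_le one_pos htt)) htt
  set Km : ℝ := max (k 1) 1 with hKmdef
  have hKm1 : 1 ≤ Km := le_max_right _ _
  have hKmpos : 0 < Km := lt_of_lt_of_le one_pos hKm1
  have hkKm : ∀ t : ℝ, 1 ≤ t → k t ≤ Km := fun t htt =>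
    le_trans (hk1 t htt) (le_max_left _ _)
  have hρ₁sq : 0 < ρ₁^2 := by positivity
  have hαpos : 0 < min (1:ℝ) (D/4) := lt_min one_pos (by positivity)
  have hα1 : min (1:ℝ) (D/4) ≤ 1 := min_le_left _ _
  have hbdα : ∀ t : ℝ, 1 ≤ t → k t ^ (min (1:ℝ) (D/4)) ≤ Km := by
    intro t htt
    have ht0 : (0:ℝ) < t := lt_of_lt_of_le one_pos htt
    calc k t ^ (min (1:ℝ) (D/4)) ≤ Km ^ (min (1:ℝ) (D/4)) :=
        Real.rpow_le_rpow (hknonneg t ht0) (hkKm t htt) hαpos.le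
      _ ≤ Km ^ (1:ℝ) := Real.rpow_le_rpow_of_exponent_le hKm1 hα1
      _ = Km := Real.rpow_one Km
  rcases le_or_gt (D/4) 1 with hd4 | hd4
  · -- α = D/4
    have hαeq : min (1:ℝ) (D/4) = D/4 := min_eq_right hd4
    refine ⟨min (c₀/2) (c₀/2*(ρ₁^2)^(D/4)/Km), ?_, 1, one_pos, ?_⟩
    · exact lt_min (half_pos hc₀pos)
        (div_pos (mul_pos (half_pos hc₀pos) (Real.rpow_pos_of_pos hρ₁sq _)) hKmpos)
    · filter_upwards [ae_restrict_mem measurableSet_Ici] with t htt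
      have htt' : (1:ℝ) ≤ t := htt
      have ht : (0:ℝ) < t := lt_of_lt_of_le one_pos htt'
      by_cases hk0 : k t = 0
      · rw [hk0, Real.zero_rpow (by rw [hαeq]; positivity : min (1:ℝ) (D/4) ≠ 0)]
        simpa using ENNReal.toReal_nonneg
      · have hkpos : 0 < k t := lt_of_le_of_ne (hknonneg t ht) (Ne.symm hk0)
        rcases le_or_gt (k t) (ρ₁^2) with hle | hgt
        · have hkey := key t ht (k t) hkpos hle
          have hs : (1:ℝ)/2 ≤ s t (k t) := by
            have h := hslow t ht (k t) hkpos.le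
            rw [mul_inv_cancel₀ hk0] at h
            norm_num at h
            linarith
          have hy : (0:ℝ) < k t ^ (D/4) := Real.rpow_pos_of_pos hkpos _
          calc min (c₀/2) (c₀/2*(ρ₁^2)^(D/4)/Km) * k t ^ (min (1:ℝ) (D/4))
              ≤ (c₀/2) * k t ^ (D/4) := by
                rw [hαeq]
                exact mul_le_mul_of_nonneg_right (min_le_left _ _) hy.le
            _ ≤ c₀ * (s t (k t) * k t ^ (D/4)) := by
                have h12 : c₀ * ((1:ℝ)/2 * (k t ^ (D/4)))
                    ≤ c₀ * (s t (k t) * k t ^ (D/4)) :=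
                  mul_le_mul_of_nonneg_left
                    (mul_le_mul_of_nonneg_right hs hy.le) hc₀pos.le
                linarith
            _ ≤ _ := hkey
        · have hkey := key t ht (ρ₁^2) hρ₁sq le_rfl
          have hs : (1:ℝ)/2 ≤ s t (ρ₁^2) := by
            have h := hslow t ht (ρ₁^2) hρ₁sq.le
            have h1 : ρ₁^2 * (k t)⁻¹ ≤ 1 := by
              rw [← div_eq_mul_inv, div_le_one hkpos]
              exact hgt.le
            have hden : 0 < 1 + ρ₁^2*(k t)⁻¹ :=
              add_pos_of_pos_of_nonneg one_pos
                (mul_nonneg hρ₁sq.le (inv_nonneg.2 hkpos.le))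
            calc (1:ℝ)/2 ≤ 1/(1+ρ₁^2*(k t)⁻¹) :=
                one_div_le_one_div_of_le hden (by linarith)
              _ ≤ s t (ρ₁^2) := h
          have hy : (0:ℝ) < (ρ₁^2) ^ (D/4) := Real.rpow_pos_of_pos hρ₁sq _
          calc min (c₀/2) (c₀/2*(ρ₁^2)^(D/4)/Km) * k t ^ (min (1:ℝ) (D/4))
              ≤ (c₀/2*(ρ₁^2)^(D/4)/Km) * Km := by
                apply mul_le_mul (min_le_right _ _) (hbdα t htt')
                  (Real.rpow_nonneg (hknonneg t ht) _)
                  (le_of_lt (div_pos (mul_pos (half_pos hc₀pos) hy) hKmpos))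
            _ = c₀/2*(ρ₁^2)^(D/4) := div_mul_cancel₀ _ hKmpos.ne'
            _ ≤ c₀ * (s t (ρ₁^2) * (ρ₁^2)^(D/4)) := by
                have h12 : c₀ * ((1:ℝ)/2 * ((ρ₁^2) ^ (D/4)))
                    ≤ c₀ * (s t (ρ₁^2) * (ρ₁^2)^(D/4)) :=
                  mul_le_mul_of_nonneg_left
                    (mul_le_mul_of_nonneg_right hs hy.le) hc₀pos.le
                linarith
            _ ≤ _ := hkey
  · -- α = 1
    have hαeq : min (1:ℝ) (D/4) = 1 := min_eq_left hd4.le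
    refine ⟨c₀*(ρ₁^2)^(D/4)/(Km+ρ₁^2), div_pos (mul_pos hc₀pos
      (Real.rpow_pos_of_pos hρ₁sq _)) (add_pos hKmpos hρ₁sq), 1, one_pos, ?_⟩
    filter_upwards [ae_restrict_mem measurableSet_Ici] with t htt
    have htt' : (1:ℝ) ≤ t := htt
    have ht : (0:ℝ) < t := lt_of_lt_of_le one_pos htt'
    have hkey := key t ht (ρ₁^2) hρ₁sq le_rfl
    have hs : k t/(Km+ρ₁^2) ≤ s t (ρ₁^2) := by
      by_cases hk0 : k t = 0
      · rw [hk0, zero_div]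
        exact (hspos t ht _ hρ₁sq.le).le
      · have hkpos : 0 < k t := lt_of_le_of_ne (hknonneg t ht) (Ne.symm hk0)
        have h := hslow t ht (ρ₁^2) hρ₁sq.le
        have he : 1 + ρ₁^2*(k t)⁻¹ = (k t + ρ₁^2)/(k t) := by
          field_simp
        rw [he, one_div_div] at h
        calc k t/(Km+ρ₁^2) ≤ k t/(k t+ρ₁^2) :=
            div_le_div_of_nonneg_left hkpos.le (add_pos hkpos hρ₁sq)
              (by linarith [hkKm t htt'])
          _ ≤ s t (ρ₁^2) := h
    rw [hαeq, Real.rpow_one]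
    calc c₀*(ρ₁^2)^(D/4)/(Km+ρ₁^2) * k t
        = c₀ * ((k t/(Km+ρ₁^2)) * (ρ₁^2)^(D/4)) := by ring
      _ ≤ c₀ * (s t (ρ₁^2) * (ρ₁^2)^(D/4)) := by
          apply mul_le_mul_of_nonneg_left _ hc₀pos.le
          exact mul_le_mul_of_nonneg_right hs (Real.rpow_nonneg hρ₁sq.le _)
      _ ≤ _ := hkey
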